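/- Let μ be a probability measure on ℝⁿ with density ρ, and for s > 0 let ρ_s be the density of μ ∗ γ_s where γ_s is the centered Gaussian with covariance s·Id. Then the Hessian of log ρ_s satisfies -s⁻¹·Id ≤ ∇² log ρ_s(x) for every x ∈ ℝⁿ; that is, the function x ↦ log ρ_s(x) + |x|²/(2s) is convex. -/

import Mathlib

open Real Set MeasureTheory
open scoped ENNReal

/-- Paper Lemma 4.1, inequality (Id), left-hand side: for a probability density `ρ` on `ℝⁿ`
and `s > 0`, the Gaussian convolution `ρ_s = ρ ∗ g_s` satisfies
`∇² log ρ_s ≥ -s⁻¹ Id`, i.e. `x ↦ log ρ_s(x) + |x|²/(2s)` is convex. -/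
theorem hessian_log_gaussian_convolution_lower {n : ℕ}
    (ρ : EuclideanSpace ℝ (Fin n) → ℝ) (hρmeas : Measurable ρ) (hρ0 : ∀ x, 0 ≤ ρ x)
    (hρ1 : ∫ x, ρ x = 1)
    (s : ℝ) (hs : 0 < s)
    (ρs : EuclideanSpace ℝ (Fin n) → ℝ)
    (hρs : ∀ x, ρs x = (2 * π * s) ^ (-(n : ℝ) / 2) *
      ∫ y, ρ y * Real.exp (-‖y - x‖ ^ 2 / (2 * s))) :
    ConvexOn ℝ univ (fun x : EuclideanSpace ℝ (Fin n) =>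
      Real.log (ρs x) + ‖x‖ ^ 2 / (2 * s)) := by
  classical
  have hρint : Integrable ρ := by
    by_contra h
    rw [integral_undef h] at hρ1
    norm_num at hρ1
  set c : ℝ := (2 * π * s) ^ (-(n : ℝ) / 2) with hc
  have hcpos : 0 < c := Real.rpow_pos_of_pos (by positivity) _
  set E : EuclideanSpace ℝ (Fin n) → EuclideanSpace ℝ (Fin n) → ℝ :=
    fun x y => (inner ℝ y x : ℝ) / s - ‖y‖ ^ 2 / (2 * s) with hEdef
  set h : EuclideanSpace ℝ (Fin n) → EuclideanSpace ℝ (Fin n) → ℝ :=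
    fun x y => ρ y * Real.exp (E x y) with hhdef
  have hEmeas : ∀ x, Measurable (fun y => E x y) := by
    intro x
    apply Measurable.sub
    · exact ((continuous_id.inner continuous_const).measurable).div_const s
    · exact ((continuous_norm.pow 2).measurable).div_const _
  have hhmeas : ∀ x, Measurable (h x) := fun x => hρmeas.mul (hEmeas x).exp
  have hh0 : ∀ x y, 0 ≤ h x y := fun x y => mul_nonneg (hρ0 y) (Real.exp_pos _).le
  have hkey : ∀ x y : EuclideanSpace ℝ (Fin n),
      -‖y - x‖ ^ 2 / (2 * s) = -‖x‖ ^ 2 / (2 * s) + E x y := by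
    intro x y
    rw [hEdef]
    simp only [norm_sub_sq_real]
    field_simp
    ring
  have hEbound : ∀ x y, E x y ≤ ‖x‖ ^ 2 / (2 * s) := by
    intro x y
    have h3 : ‖y - x‖ ^ 2 = ‖y‖ ^ 2 - 2 * inner ℝ y x + ‖x‖ ^ 2 := norm_sub_sq_real y x
    have h4 : 0 ≤ ‖y - x‖ ^ 2 := sq_nonneg _
    have h5 : E x y = (2 * inner ℝ y x - ‖y‖ ^ 2) / (2 * s) := by
      simp only [hEdef]
      field_simp
    rw [h5]
    gcongr
    linarith
  have hhint : ∀ x, Integrable (h x) := by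
    intro x
    refine Integrable.mono' (hρint.mul_const (Real.exp (‖x‖ ^ 2 / (2 * s))))
      (hhmeas x).aestronglyMeasurable (ae_of_all _ fun y => ?_)
    rw [Real.norm_of_nonneg (hh0 x y)]
    exact mul_le_mul_of_nonneg_left (Real.exp_le_exp.2 (hEbound x y)) (hρ0 y)
  set G : EuclideanSpace ℝ (Fin n) → EuclideanSpace ℝ (Fin n) → ℝ≥0∞ :=
    fun x y => ENNReal.ofReal (h x y) with hGdef
  set L : EuclideanSpace ℝ (Fin n) → ℝ≥0∞ := fun x => ∫⁻ y, G x y with hLdef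
  have hLlt : ∀ x, L x ≠ ⊤ := fun x => (hhint x).lintegral_lt_top.ne
  have hInt_eq : ∀ x, ∫ y, h x y = (L x).toReal := by
    intro x
    rw [hLdef, hGdef,
      integral_eq_lintegral_of_nonneg_ae (ae_of_all _ (hh0 x)) (hhmeas x).aestronglyMeasurable]
  have hρpos : 0 < volume (Function.support ρ) := by
    rw [← integral_pos_iff_support_of_nonneg hρ0 hρint, hρ1]
    norm_num
  have hFpos : ∀ x, 0 < ∫ y, h x y := by
    intro x
    rw [integral_pos_iff_support_of_nonneg (hh0 x) (hhint x)]
    have hsupp : Function.support (h x) = Function.support ρ := by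
      ext y
      simp [hhdef, Function.mem_support, mul_eq_zero, Real.exp_ne_zero]
    rw [hsupp]
    exact hρpos
  have hGmeas : ∀ x, AEMeasurable (G x) := fun x =>
    (ENNReal.measurable_ofReal.comp (hhmeas x)).aemeasurable
  -- convexity of the log of the integral
  have hφ : ConvexOn ℝ univ (fun x => Real.log (∫ y, h x y)) := by
    refine ⟨convex_univ, fun x _ y _ a b ha hb hab => ?_⟩
    rcases eq_or_lt_of_le ha with rfl | ha'
    · have hb1 : b = 1 := by linarith
      subst hb1
      simp
    rcases eq_or_lt_of_le hb with rfl | hb'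
    · have ha1 : a = 1 := by linarith
      subst ha1
      simp
    have ha1 : a < 1 := by linarith
    have hpq : Real.HolderConjugate a⁻¹ b⁻¹ :=
      ⟨by rw [inv_inv, inv_inv, inv_one]; exact hab, inv_pos.2 ha', inv_pos.2 hb'⟩
    have hpoint : ∀ z, G (a • x + b • y) z = (G x z) ^ a * (G y z) ^ b := by
      intro z
      have hEz : E (a • x + b • y) z = E x z * a + E y z * b := by
        simp only [hEdef, inner_add_right, real_inner_smul_right]
        field_simp
        ring_nf
        linear_combination (‖z‖ ^ 2) * hab
      have hreal : h (a • x + b • y) z = (h x z) ^ a * (h y z) ^ b := by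
        simp only [hhdef]
        rw [Real.mul_rpow (hρ0 z) (Real.exp_pos _).le,
          Real.mul_rpow (hρ0 z) (Real.exp_pos _).le, ← Real.exp_mul, ← Real.exp_mul,
          hEz]
        have hρz : ρ z ^ a * ρ z ^ b = ρ z := by
          rw [← Real.rpow_add' (hρ0 z) (by rw [hab]; norm_num), hab, Real.rpow_one]
        rw [Real.exp_add]
        calc ρ z * (Real.exp (E x z * a) * Real.exp (E y z * b))
            = (ρ z ^ a * ρ z ^ b) * (Real.exp (E x z * a) * Real.exp (E y z * b)) := by
              rw [hρz]
          _ = _ := by ring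
      simp only [hGdef]
      rw [hreal, ENNReal.ofReal_mul (Real.rpow_nonneg (hh0 x z) a),
        ENNReal.ofReal_rpow_of_nonneg (hh0 x z) ha,
        ENNReal.ofReal_rpow_of_nonneg (hh0 y z) hb]
    have hkeyL : L (a • x + b • y) ≤ (L x) ^ a * (L y) ^ b := by
      simp only [hLdef]
      calc ∫⁻ z, G (a • x + b • y) z
          = ∫⁻ z, ((fun z => (G x z) ^ a) * fun z => (G y z) ^ b) z := by
            refine lintegral_congr fun z => ?_
            simp only [Pi.mul_apply]
            exact hpoint z
        _ ≤ (∫⁻ z, ((G x z) ^ a) ^ (a⁻¹)) ^ (1 / a⁻¹) *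
            (∫⁻ z, ((G y z) ^ b) ^ (b⁻¹)) ^ (1 / b⁻¹) :=
            ENNReal.lintegral_mul_le_Lp_mul_Lq volume hpq
              ((hGmeas x).pow_const a) ((hGmeas y).pow_const b)
        _ = (L x) ^ a * (L y) ^ b := by
            simp only [hLdef, one_div, inv_inv, ← ENNReal.rpow_mul,
              mul_inv_cancel₀ ha'.ne', mul_inv_cancel₀ hb'.ne', ENNReal.rpow_one]
    have htoReal : (L (a • x + b • y)).toReal ≤ (L x).toReal ^ a * (L y).toReal ^ b := by
      have hne : (L x) ^ a * (L y) ^ b ≠ ⊤ :=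
        ENNReal.mul_ne_top (ENNReal.rpow_ne_top_of_nonneg ha (hLlt x))
          (ENNReal.rpow_ne_top_of_nonneg hb (hLlt y))
      have := ENNReal.toReal_mono hne hkeyL
      rwa [ENNReal.toReal_mul, ← ENNReal.toReal_rpow, ← ENNReal.toReal_rpow] at this
    have hFx : 0 < (L x).toReal := by rw [← hInt_eq]; exact hFpos x
    have hFy : 0 < (L y).toReal := by rw [← hInt_eq]; exact hFpos y
    simp only [smul_eq_mul]
    rw [hInt_eq, hInt_eq, hInt_eq]
    calc Real.log ((L (a • x + b • y)).toReal)
        ≤ Real.log ((L x).toReal ^ a * (L y).toReal ^ b) := by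
          apply Real.log_le_log _ htoReal
          rw [← hInt_eq]
          exact hFpos _
      _ = a * Real.log ((L x).toReal) + b * Real.log ((L y).toReal) := by
          rw [Real.log_mul (Real.rpow_pos_of_pos hFx a).ne' (Real.rpow_pos_of_pos hFy b).ne',
            Real.log_rpow hFx, Real.log_rpow hFy]
  -- identify the target function
  have heq : (fun x : EuclideanSpace ℝ (Fin n) => Real.log (ρs x) + ‖x‖ ^ 2 / (2 * s))
      = fun x => Real.log c + Real.log (∫ y, h x y) := by
    funext x
    have hint : ∫ y, ρ y * Real.exp (-‖y - x‖ ^ 2 / (2 * s))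
        = Real.exp (-‖x‖ ^ 2 / (2 * s)) * ∫ y, h x y := by
      rw [← integral_const_mul]
      refine integral_congr_ae (ae_of_all _ fun y => ?_)
      simp only [hhdef]
      rw [hkey x y, Real.exp_add]
      ring
    rw [hρs x, hint, Real.log_mul hcpos.ne'
        (mul_ne_zero (Real.exp_ne_zero _) (hFpos x).ne'),
      Real.log_mul (Real.exp_ne_zero _) (hFpos x).ne', Real.log_exp]
    ring
  rw [heq]
  exact (convexOn_const _ convex_univ).add hφ
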